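/- Let Φ(E₈) ⊂ ℝ⁸ be the E₈ root system with highest root θ = ε₇+ε₈, and S_{±1/2} = {γ ∈ Φ(E₈) : (γ|θ) = ±1}. For every pair α, β ∈ S_{-1/2} with (α|β) = 0, the set X = { γ ∈ S_{1/2} : (α|γ) = 0 and (γ|β) = -1 } satisfies Σ_{γ∈X} γ = 8θ + 4α - 4β (as a vector in ℝ⁸); in particular |X| = 16. -/

import Mathlib

/-- Standard basis vector of `ℝ⁸`. -/
noncomputable def eE8 (i : Fin 8) : Fin 8 → ℝ := Pi.single i 1

/-- Standard inner product on `ℝ⁸`. -/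
noncomputable def ipE8 (x y : Fin 8 → ℝ) : ℝ := ∑ i, x i * y i

/-- The root system of type `E₈`: the 240 vectors `±εᵢ ± εⱼ` (`i < j`) together with
`(1/2)∑ σᵢ εᵢ` with `σᵢ ∈ {±1}` and an even number of `σᵢ` equal to `-1`. -/
def PhiE8 : Set (Fin 8 → ℝ) :=
  { v | (∃ (i j : Fin 8) (μ ν : ℝ), i < j ∧ (μ = 1 ∨ μ = -1) ∧ (ν = 1 ∨ ν = -1) ∧
          v = μ • eE8 i + ν • eE8 j) ∨
        (∃ σ : Fin 8 → ℝ, (∀ i, σ i = 1 ∨ σ i = -1) ∧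
          Even {i | σ i = -1}.ncard ∧ v = (1 / 2 : ℝ) • σ) }

/-- The highest root `θ = ε₇ + ε₈` of `E₈`. -/
noncomputable def thetaE8 : Fin 8 → ℝ := eE8 6 + eE8 7

/-! ### Integer-list model of the (doubled) roots -/

def LLitc0 : List (List ℤ) := [[2, 2, 0, 0, 0, 0, 0, 0], [2, -2, 0, 0, 0, 0, 0, 0], [-2, 2, 0, 0, 0, 0, 0, 0], [-2, -2, 0, 0, 0, 0, 0, 0], [2, 0, 2, 0, 0, 0, 0, 0], [2, 0, -2, 0, 0, 0, 0, 0], [-2, 0, 2, 0, 0, 0, 0, 0], [-2, 0, -2, 0, 0, 0, 0, 0], [2, 0, 0, 2, 0, 0, 0, 0], [2, 0, 0, -2, 0, 0, 0, 0], [-2, 0, 0, 2, 0, 0, 0, 0], [-2, 0, 0, -2, 0, 0, 0, 0], [2, 0, 0, 0, 2, 0, 0, 0], [2, 0, 0, 0, -2, 0, 0, 0], [-2, 0, 0, 0, 2, 0, 0, 0], [-2, 0, 0, 0, -2, 0, 0, 0], [2, 0, 0, 0, 0, 2, 0, 0], [2, 0, 0, 0, 0, -2, 0, 0], [-2, 0,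 0, 0, 0, 2, 0, 0], [-2, 0, 0, 0, 0, -2, 0, 0], [2, 0, 0, 0, 0, 0, 2, 0], [2, 0, 0, 0, 0, 0, -2, 0], [-2, 0, 0, 0, 0, 0, 2, 0], [-2, 0, 0, 0, 0, 0, -2, 0], [2, 0, 0, 0, 0, 0, 0, 2], [2, 0, 0, 0, 0, 0, 0, -2], [-2, 0, 0, 0, 0, 0, 0, 2], [-2, 0, 0, 0, 0, 0, 0, -2], [0, 2, 2, 0, 0, 0, 0, 0], [0, 2, -2, 0, 0, 0, 0, 0], [0, -2, 2, 0, 0, 0, 0, 0], [0, -2, -2, 0, 0, 0, 0, 0], [0, 2, 0, 2, 0, 0, 0, 0], [0, 2, 0, -2, 0, 0, 0, 0], [0, -2, 0, 2, 0, 0, 0, 0], [0, -2, 0, -2, 0, 0, 0, 0], [0, 2, 0, 0, 2, 0, 0, 0], [0, 2, 0, 0, -2, 0, 0, 0], [0, -2, 0, 0, 2, 0, 0, 0], [0, -2, 0, 0, -2, 0, 0, 0]]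

def LLitc1 : List (List ℤ) := [[0, 2, 0, 0, 0, 2, 0, 0], [0, 2, 0, 0, 0, -2, 0, 0], [0, -2, 0, 0, 0, 2, 0, 0], [0, -2, 0, 0, 0, -2, 0, 0], [0, 2, 0, 0, 0, 0, 2, 0], [0, 2, 0, 0, 0, 0, -2, 0], [0, -2, 0, 0, 0, 0, 2, 0], [0, -2, 0, 0, 0, 0, -2, 0], [0, 2, 0, 0, 0, 0, 0, 2], [0, 2, 0, 0, 0, 0, 0, -2], [0, -2, 0, 0, 0, 0, 0, 2], [0, -2, 0, 0, 0, 0, 0, -2], [0, 0, 2, 2, 0, 0, 0, 0], [0, 0, 2, -2, 0, 0, 0, 0], [0, 0, -2, 2, 0, 0, 0, 0], [0, 0, -2, -2, 0, 0, 0, 0], [0, 0, 2, 0, 2, 0, 0, 0], [0, 0, 2, 0, -2, 0, 0, 0], [0, 0, -2, 0, 2, 0, 0, 0], [0, 0, -2, 0, -2, 0, 0, 0], [0, 0, 2, 0, 0, 2, 0, 0], [0, 0, 2, 0, 0, -2, 0, 0], [0, 0, -2, 0, 0, 2, 0, 0], [0, 0, -2, 0, 0, -2, 0, 0], [0, 0,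 2, 0, 0, 0, 2, 0], [0, 0, 2, 0, 0, 0, -2, 0], [0, 0, -2, 0, 0, 0, 2, 0], [0, 0, -2, 0, 0, 0, -2, 0], [0, 0, 2, 0, 0, 0, 0, 2], [0, 0, 2, 0, 0, 0, 0, -2], [0, 0, -2, 0, 0, 0, 0, 2], [0, 0, -2, 0, 0, 0, 0, -2], [0, 0, 0, 2, 2, 0, 0, 0], [0, 0, 0, 2, -2, 0, 0, 0], [0, 0, 0, -2, 2, 0, 0, 0], [0, 0, 0, -2, -2, 0, 0, 0], [0, 0, 0, 2, 0, 2, 0, 0], [0, 0, 0, 2, 0, -2, 0, 0], [0, 0, 0, -2, 0, 2, 0, 0], [0, 0, 0, -2, 0, -2, 0, 0]]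

def LLitc2 : List (List ℤ) := [[0, 0, 0, 2, 0, 0, 2, 0], [0, 0, 0, 2, 0, 0, -2, 0], [0, 0, 0, -2, 0, 0, 2, 0], [0, 0, 0, -2, 0, 0, -2, 0], [0, 0, 0, 2, 0, 0, 0, 2], [0, 0, 0, 2, 0, 0, 0, -2], [0, 0, 0, -2, 0, 0, 0, 2], [0, 0, 0, -2, 0, 0, 0, -2], [0, 0, 0, 0, 2, 2, 0, 0], [0, 0, 0, 0, 2, -2, 0, 0], [0, 0, 0, 0, -2, 2, 0, 0], [0, 0, 0, 0, -2, -2, 0, 0], [0, 0, 0, 0, 2, 0, 2, 0], [0, 0, 0, 0, 2, 0, -2, 0], [0, 0, 0, 0, -2, 0, 2, 0], [0, 0, 0, 0, -2, 0, -2, 0], [0, 0, 0, 0, 2, 0, 0, 2], [0, 0, 0, 0, 2, 0, 0, -2], [0, 0, 0, 0, -2, 0, 0, 2], [0, 0, 0, 0, -2, 0, 0, -2], [0, 0, 0, 0, 0, 2, 2, 0], [0, 0, 0, 0, 0, 2, -2, 0], [0, 0, 0, 0, 0, -2, 2, 0], [0, 0, 0, 0, 0, -2, -2, 0], [0, 0,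 0, 0, 0, 2, 0, 2], [0, 0, 0, 0, 0, 2, 0, -2], [0, 0, 0, 0, 0, -2, 0, 2], [0, 0, 0, 0, 0, -2, 0, -2], [0, 0, 0, 0, 0, 0, 2, 2], [0, 0, 0, 0, 0, 0, 2, -2], [0, 0, 0, 0, 0, 0, -2, 2], [0, 0, 0, 0, 0, 0, -2, -2], [-1, -1, -1, -1, -1, -1, -1, -1], [1, 1, -1, -1, -1, -1, -1, -1], [1, -1, 1, -1, -1, -1, -1, -1], [-1, 1, 1, -1, -1, -1, -1, -1], [1, -1, -1, 1, -1, -1, -1, -1], [-1, 1, -1, 1, -1, -1, -1, -1], [-1, -1, 1, 1, -1, -1, -1, -1], [1, 1, 1, 1, -1, -1, -1, -1]]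

def LLitc3 : List (List ℤ) := [[1, -1, -1, -1, 1, -1, -1, -1], [-1, 1, -1, -1, 1, -1, -1, -1], [-1, -1, 1, -1, 1, -1, -1, -1], [1, 1, 1, -1, 1, -1, -1, -1], [-1, -1, -1, 1, 1, -1, -1, -1], [1, 1, -1, 1, 1, -1, -1, -1], [1, -1, 1, 1, 1, -1, -1, -1], [-1, 1, 1, 1, 1, -1, -1, -1], [1, -1, -1, -1, -1, 1, -1, -1], [-1, 1, -1, -1, -1, 1, -1, -1], [-1, -1, 1, -1, -1, 1, -1, -1], [1, 1, 1, -1, -1, 1, -1, -1], [-1, -1, -1, 1, -1, 1, -1, -1], [1, 1, -1, 1, -1, 1, -1, -1], [1, -1, 1, 1, -1, 1, -1, -1], [-1, 1, 1, 1, -1, 1, -1, -1], [-1, -1, -1, -1, 1, 1, -1, -1], [1, 1, -1, -1, 1, 1, -1, -1], [1, -1, 1, -1, 1, 1, -1, -1], [-1, 1, 1, -1, 1, 1, -1, -1], [1, -1, -1, 1, 1, 1, -1, -1], [-1, 1, -1, 1, 1, 1, -1, -1], [-1, -1, 1, 1, 1, 1, -1, -1], [1, 1, 1, 1, 1, 1,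 -1, -1], [1, -1, -1, -1, -1, -1, 1, -1], [-1, 1, -1, -1, -1, -1, 1, -1], [-1, -1, 1, -1, -1, -1, 1, -1], [1, 1, 1, -1, -1, -1, 1, -1], [-1, -1, -1, 1, -1, -1, 1, -1], [1, 1, -1, 1, -1, -1, 1, -1], [1, -1, 1, 1, -1, -1, 1, -1], [-1, 1, 1, 1, -1, -1, 1, -1], [-1, -1, -1, -1, 1, -1, 1, -1], [1, 1, -1, -1, 1, -1, 1, -1], [1, -1, 1, -1, 1, -1, 1, -1], [-1, 1, 1, -1, 1, -1, 1, -1], [1, -1, -1, 1, 1, -1, 1, -1], [-1, 1, -1, 1, 1, -1, 1, -1], [-1, -1, 1, 1, 1, -1, 1, -1], [1, 1, 1, 1, 1, -1, 1, -1]]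

def LLitc4 : List (List ℤ) := [[-1, -1, -1, -1, -1, 1, 1, -1], [1, 1, -1, -1, -1, 1, 1, -1], [1, -1, 1, -1, -1, 1, 1, -1], [-1, 1, 1, -1, -1, 1, 1, -1], [1, -1, -1, 1, -1, 1, 1, -1], [-1, 1, -1, 1, -1, 1, 1, -1], [-1, -1, 1, 1, -1, 1, 1, -1], [1, 1, 1, 1, -1, 1, 1, -1], [1, -1, -1, -1, 1, 1, 1, -1], [-1, 1, -1, -1, 1, 1, 1, -1], [-1, -1, 1, -1, 1, 1, 1, -1], [1, 1, 1, -1, 1, 1, 1, -1], [-1, -1, -1, 1, 1, 1, 1, -1], [1, 1, -1, 1, 1, 1, 1, -1], [1, -1, 1, 1, 1, 1, 1, -1], [-1, 1, 1, 1, 1, 1, 1, -1], [1, -1, -1, -1, -1, -1, -1, 1], [-1, 1, -1, -1, -1, -1, -1, 1], [-1, -1, 1, -1, -1, -1, -1, 1], [1, 1, 1, -1, -1, -1, -1, 1], [-1, -1, -1, 1, -1, -1, -1, 1], [1, 1, -1, 1, -1, -1, -1, 1], [1, -1, 1, 1, -1, -1, -1, 1], [-1, 1, 1, 1, -1, -1,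 -1, 1], [-1, -1, -1, -1, 1, -1, -1, 1], [1, 1, -1, -1, 1, -1, -1, 1], [1, -1, 1, -1, 1, -1, -1, 1], [-1, 1, 1, -1, 1, -1, -1, 1], [1, -1, -1, 1, 1, -1, -1, 1], [-1, 1, -1, 1, 1, -1, -1, 1], [-1, -1, 1, 1, 1, -1, -1, 1], [1, 1, 1, 1, 1, -1, -1, 1], [-1, -1, -1, -1, -1, 1, -1, 1], [1, 1, -1, -1, -1, 1, -1, 1], [1, -1, 1, -1, -1, 1, -1, 1], [-1, 1, 1, -1, -1, 1, -1, 1], [1, -1, -1, 1, -1, 1, -1, 1], [-1, 1, -1, 1, -1, 1, -1, 1], [-1, -1, 1, 1, -1, 1, -1, 1], [1, 1, 1, 1, -1, 1, -1, 1]]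

def LLitc5 : List (List ℤ) := [[1, -1, -1, -1, 1, 1, -1, 1], [-1, 1, -1, -1, 1, 1, -1, 1], [-1, -1, 1, -1, 1, 1, -1, 1], [1, 1, 1, -1, 1, 1, -1, 1], [-1, -1, -1, 1, 1, 1, -1, 1], [1, 1, -1, 1, 1, 1, -1, 1], [1, -1, 1, 1, 1, 1, -1, 1], [-1, 1, 1, 1, 1, 1, -1, 1], [-1, -1, -1, -1, -1, -1, 1, 1], [1, 1, -1, -1, -1, -1, 1, 1], [1, -1, 1, -1, -1, -1, 1, 1], [-1, 1, 1, -1, -1, -1, 1, 1], [1, -1, -1, 1, -1, -1, 1, 1], [-1, 1, -1, 1, -1, -1, 1, 1], [-1, -1, 1, 1, -1, -1, 1, 1], [1, 1, 1, 1, -1, -1, 1, 1], [1, -1, -1, -1, 1, -1, 1, 1], [-1, 1, -1, -1, 1, -1, 1, 1], [-1, -1, 1, -1, 1, -1, 1, 1], [1, 1, 1, -1, 1, -1, 1, 1], [-1, -1, -1, 1, 1, -1, 1, 1], [1, 1, -1, 1, 1, -1, 1, 1], [1, -1, 1, 1, 1, -1, 1, 1], [-1, 1, 1, 1, 1, -1,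 1, 1], [1, -1, -1, -1, -1, 1, 1, 1], [-1, 1, -1, -1, -1, 1, 1, 1], [-1, -1, 1, -1, -1, 1, 1, 1], [1, 1, 1, -1, -1, 1, 1, 1], [-1, -1, -1, 1, -1, 1, 1, 1], [1, 1, -1, 1, -1, 1, 1, 1], [1, -1, 1, 1, -1, 1, 1, 1], [-1, 1, 1, 1, -1, 1, 1, 1], [-1, -1, -1, -1, 1, 1, 1, 1], [1, 1, -1, -1, 1, 1, 1, 1], [1, -1, 1, -1, 1, 1, 1, 1], [-1, 1, 1, -1, 1, 1, 1, 1], [1, -1, -1, 1, 1, 1, 1, 1], [-1, 1, -1, 1, 1, 1, 1, 1], [-1, -1, 1, 1, 1, 1, 1, 1], [1, 1, 1, 1, 1, 1, 1, 1]]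

def LLit : List (List ℤ) := LLitc0 ++ LLitc1 ++ LLitc2 ++ LLitc3 ++ LLitc4 ++ LLitc5

def LmLitc0 : List (List ℤ) := [[2, 0, 0, 0, 0, 0, -2, 0], [-2, 0, 0, 0, 0, 0, -2, 0], [2, 0, 0, 0, 0, 0, 0, -2], [-2, 0, 0, 0, 0, 0, 0, -2], [0, 2, 0, 0, 0, 0, -2, 0], [0, -2, 0, 0, 0, 0, -2, 0], [0, 2, 0, 0, 0, 0, 0, -2], [0, -2, 0, 0, 0, 0, 0, -2], [0, 0, 2, 0, 0, 0, -2, 0], [0, 0, -2, 0, 0, 0, -2, 0], [0, 0, 2, 0, 0, 0, 0, -2], [0, 0, -2, 0, 0, 0, 0, -2], [0, 0, 0, 2, 0, 0, -2, 0], [0, 0, 0, -2, 0, 0, -2, 0], [0, 0, 0, 2, 0, 0, 0, -2], [0, 0, 0, -2, 0, 0, 0, -2], [0, 0, 0, 0, 2, 0, -2, 0], [0, 0, 0, 0, -2, 0, -2, 0], [0, 0, 0, 0, 2, 0, 0, -2], [0, 0, 0, 0, -2, 0, 0, -2], [0, 0, 0, 0, 0, 2, -2, 0], [0, 0, 0,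 0, 0, -2, -2, 0], [0, 0, 0, 0, 0, 2, 0, -2], [0, 0, 0, 0, 0, -2, 0, -2], [-1, -1, -1, -1, -1, -1, -1, -1], [1, 1, -1, -1, -1, -1, -1, -1], [1, -1, 1, -1, -1, -1, -1, -1], [-1, 1, 1, -1, -1, -1, -1, -1], [1, -1, -1, 1, -1, -1, -1, -1], [-1, 1, -1, 1, -1, -1, -1, -1], [-1, -1, 1, 1, -1, -1, -1, -1], [1, 1, 1, 1, -1, -1, -1, -1], [1, -1, -1, -1, 1, -1, -1, -1], [-1, 1, -1, -1, 1, -1, -1, -1], [-1, -1, 1, -1, 1, -1, -1, -1], [1, 1, 1, -1, 1, -1, -1, -1], [-1, -1, -1, 1, 1, -1, -1, -1], [1, 1, -1, 1, 1, -1, -1, -1], [1, -1, 1, 1, 1, -1, -1, -1], [-1, 1, 1, 1, 1, -1, -1, -1]]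

def LmLitc1 : List (List ℤ) := [[1, -1, -1, -1, -1, 1, -1, -1], [-1, 1, -1, -1, -1, 1, -1, -1], [-1, -1, 1, -1, -1, 1, -1, -1], [1, 1, 1, -1, -1, 1, -1, -1], [-1, -1, -1, 1, -1, 1, -1, -1], [1, 1, -1, 1, -1, 1, -1, -1], [1, -1, 1, 1, -1, 1, -1, -1], [-1, 1, 1, 1, -1, 1, -1, -1], [-1, -1, -1, -1, 1, 1, -1, -1], [1, 1, -1, -1, 1, 1, -1, -1], [1, -1, 1, -1, 1, 1, -1, -1], [-1, 1, 1, -1, 1, 1, -1, -1], [1, -1, -1, 1, 1, 1, -1, -1], [-1, 1, -1, 1, 1, 1, -1, -1], [-1, -1, 1, 1, 1, 1, -1, -1], [1, 1, 1, 1, 1, 1, -1, -1]]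

def LmLit : List (List ℤ) := LmLitc0 ++ LmLitc1

def LpLitc0 : List (List ℤ) := [[2, 0, 0, 0, 0, 0, 2, 0], [-2, 0, 0, 0, 0, 0, 2, 0], [2, 0, 0, 0, 0, 0, 0, 2], [-2, 0, 0, 0, 0, 0, 0, 2], [0, 2, 0, 0, 0, 0, 2, 0], [0, -2, 0, 0, 0, 0, 2, 0], [0, 2, 0, 0, 0, 0, 0, 2], [0, -2, 0, 0, 0, 0, 0, 2], [0, 0, 2, 0, 0, 0, 2, 0], [0, 0, -2, 0, 0, 0, 2, 0], [0, 0, 2, 0, 0, 0, 0, 2], [0, 0, -2, 0, 0, 0, 0, 2], [0, 0, 0, 2, 0, 0, 2, 0], [0, 0, 0, -2, 0, 0, 2, 0], [0, 0, 0, 2, 0, 0, 0, 2], [0, 0, 0, -2, 0, 0, 0, 2], [0, 0, 0, 0, 2, 0, 2, 0], [0, 0, 0, 0, -2, 0, 2, 0], [0, 0, 0, 0, 2, 0, 0, 2], [0, 0, 0, 0, -2, 0, 0, 2], [0, 0, 0, 0, 0, 2, 2, 0], [0, 0, 0, 0, 0, -2, 2, 0], [0, 0, 0, 0, 0, 2,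 0, 2], [0, 0, 0, 0, 0, -2, 0, 2], [-1, -1, -1, -1, -1, -1, 1, 1], [1, 1, -1, -1, -1, -1, 1, 1], [1, -1, 1, -1, -1, -1, 1, 1], [-1, 1, 1, -1, -1, -1, 1, 1], [1, -1, -1, 1, -1, -1, 1, 1], [-1, 1, -1, 1, -1, -1, 1, 1], [-1, -1, 1, 1, -1, -1, 1, 1], [1, 1, 1, 1, -1, -1, 1, 1], [1, -1, -1, -1, 1, -1, 1, 1], [-1, 1, -1, -1, 1, -1, 1, 1], [-1, -1, 1, -1, 1, -1, 1, 1], [1, 1, 1, -1, 1, -1, 1, 1], [-1, -1, -1, 1, 1, -1, 1, 1], [1, 1, -1, 1, 1, -1, 1, 1], [1, -1, 1, 1, 1, -1, 1, 1], [-1, 1, 1, 1, 1, -1, 1, 1]]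

def LpLitc1 : List (List ℤ) := [[1, -1, -1, -1, -1, 1, 1, 1], [-1, 1, -1, -1, -1, 1, 1, 1], [-1, -1, 1, -1, -1, 1, 1, 1], [1, 1, 1, -1, -1, 1, 1, 1], [-1, -1, -1, 1, -1, 1, 1, 1], [1, 1, -1, 1, -1, 1, 1, 1], [1, -1, 1, 1, -1, 1, 1, 1], [-1, 1, 1, 1, -1, 1, 1, 1], [-1, -1, -1, -1, 1, 1, 1, 1], [1, 1, -1, -1, 1, 1, 1, 1], [1, -1, 1, -1, 1, 1, 1, 1], [-1, 1, 1, -1, 1, 1, 1, 1], [1, -1, -1, 1, 1, 1, 1, 1], [-1, 1, -1, 1, 1, 1, 1, 1], [-1, -1, 1, 1, 1, 1, 1, 1], [1, 1, 1, 1, 1, 1, 1, 1]]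

def LpLit : List (List ℤ) := LpLitc0 ++ LpLitc1


def ipL : List ℤ → List ℤ → ℤ
  | x :: xs, y :: ys => x * y + ipL xs ys
  | _, _ => 0

def PL (a b : List ℤ) (q : List ℤ) : Bool := ipL a q = 0 && ipL q b = -4

def addL : List ℤ → List ℤ → List ℤ
  | x :: xs, y :: ys => (x + y) :: addL xs ys
  | _, _ => []

def sumL (l : List (List ℤ)) : List ℤ := l.foldr addL [0,0,0,0,0,0,0,0]

def affL : List ℤ → List ℤ → List ℤ → List ℤ
  | x :: xs, y :: ys, z :: zs => (x + 4*y - 4*z) :: affL xs ys zs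
  | _, _, _ => []

def tL : List ℤ := [0,0,0,0,0,0,2,2]

def sgn2 (b : Bool) : ℤ := if b then 1 else -1

def row1 (i j : Fin 8) (s t : Bool) : List ℤ :=
  List.ofFn fun k => (if k = i then 2 * sgn2 s else 0) + (if k = j then 2 * sgn2 t else 0)

def row2 (σ : Fin 8 → Bool) : List ℤ := List.ofFn fun k => sgn2 (σ k)

def allB : Nat → List (List Bool)
  | 0 => [[]]
  | n + 1 => (allB n).flatMap fun t => [false :: t, true :: t]

def boolFun (t : List Bool) : Fin 8 → Bool := fun k => t.getD k.val false

def Lgen : List (List ℤ) :=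
  ((List.finRange 8).flatMap fun i => (List.finRange 8).flatMap fun j =>
    if i < j then
      [row1 i j true true, row1 i j true false, row1 i j false true, row1 i j false false]
    else []) ++
  (((allB 8).filter
      fun t => decide (Even ((Finset.univ.filter fun i => boolFun t i = false).card))).map
    fun t => row2 (boolFun t))

theorem allB_mem : ∀ (n : ℕ) (t : List Bool), t.length = n → t ∈ allB n := by
  intro n
  induction n with
  | zero => intro t ht; simp [List.length_eq_zero_iff] at ht; simp [ht, allB]
  | succ n ih =>
    intro t ht
    rcases t with _ | ⟨b, t⟩
    · simp at ht
    · simp only [List.length_cons, Nat.succ_inj] at ht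
      simp only [allB, List.mem_flatMap]
      exact ⟨t, ih t ht, by rcases b <;> simp⟩

theorem boolFun_ofFn (σ : Fin 8 → Bool) : boolFun (List.ofFn σ) = σ := by
  funext k
  fin_cases k <;> rfl

/-- toR sends a doubled integer vector (as a list) to the real vector. -/
noncomputable def toR (q : List ℤ) : Fin 8 → ℝ := fun k => ((q.getD k.val 0 : ℤ) : ℝ) / 2

/-! ### decidable facts -/

set_option maxRecDepth 1000000 in
theorem D2 : ∀ q ∈ Lgen, q ∈ LLit := by decide

set_option maxRecDepth 1000000 in
theorem D3 : ∀ q ∈ LLit, q ∈ Lgen := by decide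

set_option maxRecDepth 1000000 in
theorem D4 : ∀ q ∈ LLit, q.length = 8 := by decide

set_option maxRecDepth 1000000 in
theorem D5 : ∀ q ∈ LLit, ipL q tL = -4 → q ∈ LmLit := by decide

set_option maxRecDepth 1000000 in
theorem D6 : ∀ q ∈ LpLit, q ∈ LLit ∧ ipL q tL = 4 := by decide

set_option maxRecDepth 1000000 in
theorem D7 : ∀ q ∈ LLit, ipL q tL = 4 → q ∈ LpLit := by decide

set_option maxRecDepth 1000000 in
theorem D8 : LpLit.Nodup := by decide

set_option maxRecDepth 1000000 in
set_option maxHeartbeats 4000000 in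
theorem coreL : ∀ a ∈ LmLit, ∀ b ∈ LmLit, ipL a b = 0 →
    ((LpLit.filter (PL a b)).length = 16 ∧
      sumL (LpLit.filter (PL a b)) = affL [0,0,0,0,0,0,16,16] a b) := by decide

/-! ### bridging lemmas -/

theorem fv0 : ((0 : Fin 8) : ℕ) = 0 := rfl
theorem fv1 : ((1 : Fin 8) : ℕ) = 1 := rfl
theorem fv2 : ((2 : Fin 8) : ℕ) = 2 := rfl
theorem fv3 : ((3 : Fin 8) : ℕ) = 3 := rfl
theorem fv4 : ((4 : Fin 8) : ℕ) = 4 := rfl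
theorem fv5 : ((5 : Fin 8) : ℕ) = 5 := rfl
theorem fv6 : ((6 : Fin 8) : ℕ) = 6 := rfl
theorem fv7 : ((7 : Fin 8) : ℕ) = 7 := rfl

theorem len8 (q : List ℤ) (h : q.length = 8) :
    ∃ a₀ a₁ a₂ a₃ a₄ a₅ a₆ a₇, q = [a₀,a₁,a₂,a₃,a₄,a₅,a₆,a₇] := by
  rcases q with _ | ⟨a0, _ | ⟨a1, _ | ⟨a2, _ | ⟨a3, _ | ⟨a4, _ | ⟨a5, _ | ⟨a6, _ | ⟨a7, _ | ⟨a8, t⟩⟩⟩⟩⟩⟩⟩⟩⟩ <;>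
    first
      | exact ⟨a0, a1, a2, a3, a4, a5, a6, a7, rfl⟩
      | simp_all

theorem toR_ofFn (f : Fin 8 → ℤ) (k : Fin 8) : toR (List.ofFn f) k = (f k : ℝ) / 2 := by
  fin_cases k <;> rfl

theorem toR_row1 (i j : Fin 8) (s t : Bool) :
    toR (row1 i j s t) = (sgn2 s : ℝ) • eE8 i + (sgn2 t : ℝ) • eE8 j := by
  funext k
  rw [row1, toR_ofFn]
  simp only [Pi.add_apply, Pi.smul_apply, eE8, Pi.single_apply, smul_eq_mul]
  push_cast
  split_ifs <;> ring

theorem toR_row2 (σ : Fin 8 → Bool) :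
    toR (row2 σ) = (1 / 2 : ℝ) • fun k => (sgn2 (σ k) : ℝ) := by
  funext k
  rw [row2, toR_ofFn]
  simp only [Pi.smul_apply, smul_eq_mul]
  ring

theorem mem_Phi_iff (v : Fin 8 → ℝ) : v ∈ PhiE8 ↔ ∃ q ∈ LLit, v = toR q := by
  constructor
  · rintro (⟨i, j, μ, ν, hij, hμ, hν, rfl⟩ | ⟨σ, hσ, hev, rfl⟩)
    · have mem1 : ∀ s t : Bool, row1 i j s t ∈ Lgen := by
        intro s t
        apply List.mem_append_left
        simp only [List.mem_flatMap]
        refine ⟨i, List.mem_finRange i, j, List.mem_finRange j, ?_⟩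
        rw [if_pos hij]
        rcases s <;> rcases t <;> simp
      rcases hμ with rfl | rfl <;> rcases hν with rfl | rfl
      · exact ⟨row1 i j true true, D2 _ (mem1 true true), by rw [toR_row1]; norm_num [sgn2]⟩
      · exact ⟨row1 i j true false, D2 _ (mem1 true false), by rw [toR_row1]; norm_num [sgn2]⟩
      · exact ⟨row1 i j false true, D2 _ (mem1 false true), by rw [toR_row1]; norm_num [sgn2]⟩
      · exact ⟨row1 i j false false, D2 _ (mem1 false false), by rw [toR_row1]; norm_num [sgn2]⟩
    · classical
      set σb : Fin 8 → Bool := fun k => if σ k = 1 then true else false with hσb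
      have hval : ∀ k, σ k = (sgn2 (σb k) : ℝ) := by
        intro k
        rcases hσ k with h | h <;> simp only [hσb, h, sgn2] <;> norm_num
      have hset : {i | σ i = -1} = {i | σb i = false} := by
        ext k
        rcases hσ k with h | h <;> simp only [Set.mem_setOf_eq, hσb, h] <;> norm_num
      have hpar : Even ((Finset.univ.filter fun i => σb i = false).card) := by
        have : {i | σ i = -1}.ncard = (Finset.univ.filter fun i => σb i = false).card := by
          rw [hset, Set.ncard_eq_toFinset_card', Set.toFinset_setOf]
        rwa [this] at hev
      refine ⟨row2 σb, D2 _ ?_, ?_⟩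
      · apply List.mem_append_right
        have hbf : boolFun (List.ofFn σb) = σb := boolFun_ofFn σb
        refine List.mem_map.2 ⟨List.ofFn σb, List.mem_filter.2
          ⟨allB_mem 8 _ (by simp), ?_⟩, by rw [hbf]⟩
        rw [hbf]
        exact decide_eq_true hpar
      · rw [toR_row2]
        congr 1
        funext k
        exact hval k
  · rintro ⟨q, hq, rfl⟩
    have hq' := D3 q hq
    rcases List.mem_append.1 hq' with h | h
    · simp only [List.mem_flatMap] at h
      obtain ⟨i, -, j, -, hmem⟩ := h
      by_cases hij : i < j
      · rw [if_pos hij] at hmem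
        left
        simp only [List.mem_cons, List.not_mem_nil, or_false] at hmem
        rcases hmem with rfl | rfl | rfl | rfl <;>
          exact ⟨i, j, _, _, hij, by norm_num [sgn2], by norm_num [sgn2], toR_row1 i j _ _⟩
      · rw [if_neg hij] at hmem
        simp at hmem
    · right
      obtain ⟨t, hmem, rfl⟩ := List.mem_map.1 h
      set σ := boolFun t with hσdef
      have hpar : Even ((Finset.univ.filter fun i => σ i = false).card) :=
        of_decide_eq_true (List.mem_filter.1 hmem).2
      refine ⟨fun k => (sgn2 (σ k) : ℝ), fun k => ?_, ?_, toR_row2 σ⟩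
      · rcases hb : σ k <;> simp [sgn2, hb]
      · have hset : {i | (sgn2 (σ i) : ℝ) = -1} = {i | σ i = false} := by
          ext k
          rcases hb : σ k <;> norm_num [sgn2, hb]
        rw [hset, Set.ncard_eq_toFinset_card', Set.toFinset_setOf]
        exact hpar

theorem ip_toR (q r : List ℤ) (hq : q.length = 8) (hr : r.length = 8) :
    ipE8 (toR q) (toR r) = (ipL q r : ℝ) / 4 := by
  obtain ⟨a0,a1,a2,a3,a4,a5,a6,a7,rfl⟩ := len8 q hq
  obtain ⟨b0,b1,b2,b3,b4,b5,b6,b7,rfl⟩ := len8 r hr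
  rw [ipE8, Fin.sum_univ_eight]
  simp only [toR, ipL, fv0, fv1, fv2, fv3, fv4, fv5, fv6, fv7]
  norm_num [List.getD]
  push_cast
  ring

theorem theta_eq : thetaE8 = toR tL := by
  funext k
  fin_cases k <;> simp [thetaE8, eE8, tL, toR, Pi.single_apply, List.getD]

theorem toR_inj {q r : List ℤ} (hq : q.length = 8) (hr : r.length = 8)
    (h : toR q = toR r) : q = r := by
  obtain ⟨a0,a1,a2,a3,a4,a5,a6,a7,rfl⟩ := len8 q hq
  obtain ⟨b0,b1,b2,b3,b4,b5,b6,b7,rfl⟩ := len8 r hr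
  have e : ∀ (x y : ℤ), (x:ℝ)/2 = (y:ℝ)/2 → x = y := by
    intro x y hxy
    field_simp at hxy
    exact_mod_cast hxy
  have e0 : a0 = b0 := e _ _ (congrFun h 0)
  have e1 : a1 = b1 := e _ _ (congrFun h 1)
  have e2 : a2 = b2 := e _ _ (congrFun h 2)
  have e3 : a3 = b3 := e _ _ (congrFun h 3)
  have e4 : a4 = b4 := e _ _ (congrFun h 4)
  have e5 : a5 = b5 := e _ _ (congrFun h 5)
  have e6 : a6 = b6 := e _ _ (congrFun h 6)
  have e7 : a7 = b7 := e _ _ (congrFun h 7)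
  rw [e0, e1, e2, e3, e4, e5, e6, e7]

theorem toR_addL {q r : List ℤ} (hq : q.length = 8) (hr : r.length = 8) :
    toR (addL q r) = toR q + toR r := by
  obtain ⟨a0,a1,a2,a3,a4,a5,a6,a7,rfl⟩ := len8 q hq
  obtain ⟨b0,b1,b2,b3,b4,b5,b6,b7,rfl⟩ := len8 r hr
  have e : ∀ (x y : ℤ), ((x + y : ℤ) : ℝ)/2 = (x:ℝ)/2 + (y:ℝ)/2 := by
    intro x y
    push_cast
    ring
  funext k
  fin_cases k <;> exact e _ _

theorem addL_len {q r : List ℤ} (hq : q.length = 8) (hr : r.length = 8) :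
    (addL q r).length = 8 := by
  obtain ⟨a0,a1,a2,a3,a4,a5,a6,a7,rfl⟩ := len8 q hq
  obtain ⟨b0,b1,b2,b3,b4,b5,b6,b7,rfl⟩ := len8 r hr
  rfl

theorem sumL_spec (l : List (List ℤ)) (h : ∀ q ∈ l, q.length = 8) :
    (sumL l).length = 8 ∧ (l.map toR).sum = toR (sumL l) := by
  induction l with
  | nil =>
    constructor
    · rfl
    · funext k
      fin_cases k <;> simp [sumL, toR, List.getD]
  | cons x xs ih =>
    have hx : x.length = 8 := h x List.mem_cons_self
    have ihs := ih (fun q hq => h q (List.mem_cons_of_mem x hq))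
    constructor
    · exact addL_len hx ihs.1
    · rw [List.map_cons, List.sum_cons, ihs.2]
      show _ = toR (addL x (sumL xs))
      exact (toR_addL hx ihs.1).symm

set_option maxHeartbeats 2000000 in
theorem toR_affL (a b : List ℤ) (ha : a.length = 8) (hb : b.length = 8) :
    toR (affL [0,0,0,0,0,0,16,16] a b)
      = (8 : ℝ) • thetaE8 + (4 : ℝ) • toR a - (4 : ℝ) • toR b := by
  obtain ⟨a0,a1,a2,a3,a4,a5,a6,a7,rfl⟩ := len8 a ha
  obtain ⟨b0,b1,b2,b3,b4,b5,b6,b7,rfl⟩ := len8 b hb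
  have e_low : ∀ x y : ℤ, ((0 + 4*x - 4*y : ℤ) : ℝ)/2
      = (8:ℝ) * ((0:ℝ) + (0:ℝ)) + (4:ℝ) * ((x:ℝ)/2) - (4:ℝ) * ((y:ℝ)/2) := by
    intro x y; push_cast; ring
  have e_m : ∀ x y : ℤ, ((16 + 4*x - 4*y : ℤ) : ℝ)/2
      = (8:ℝ) * ((1:ℝ) + (0:ℝ)) + (4:ℝ) * ((x:ℝ)/2) - (4:ℝ) * ((y:ℝ)/2) := by
    intro x y; push_cast; ring
  have e_h : ∀ x y : ℤ, ((16 + 4*x - 4*y : ℤ) : ℝ)/2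
      = (8:ℝ) * ((0:ℝ) + (1:ℝ)) + (4:ℝ) * ((x:ℝ)/2) - (4:ℝ) * ((y:ℝ)/2) := by
    intro x y; push_cast; ring
  funext k
  fin_cases k <;> first | exact e_low _ _ | exact e_m _ _ | exact e_h _ _

theorem div4_eq_int {x n : ℤ} (h : (x : ℝ) / 4 = (n : ℝ)) : x = 4 * n := by
  have h' : (x : ℝ) = ((4 * n : ℤ) : ℝ) := by
    rw [(div_eq_iff (by norm_num : (4:ℝ) ≠ 0)).1 h]
    push_cast
    ring
  exact_mod_cast h'

/-- In `E₈`, for `α, β ∈ S_{-1/2}` with `(α|β) = 0`, the set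
`X = {γ ∈ S_{1/2} : (α|γ) = 0, (γ|β) = -1}` satisfies
`∑_{γ ∈ X} γ = 8θ + 4α - 4β`; in particular `|X| = 16`. -/
theorem E8_case2_sum (α β : Fin 8 → ℝ)
    (hα : α ∈ PhiE8) (hαθ : ipE8 α thetaE8 = -1)
    (hβ : β ∈ PhiE8) (hβθ : ipE8 β thetaE8 = -1)
    (hαβ : ipE8 α β = 0) :
    (∑ᶠ γ ∈ {γ | γ ∈ PhiE8 ∧ ipE8 γ thetaE8 = 1 ∧ ipE8 α γ = 0 ∧ ipE8 γ β = -1}, γ)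
      = (8 : ℝ) • thetaE8 + (4 : ℝ) • α - (4 : ℝ) • β ∧
    {γ | γ ∈ PhiE8 ∧ ipE8 γ thetaE8 = 1 ∧ ipE8 α γ = 0 ∧ ipE8 γ β = -1}.ncard = 16 := by
  classical
  obtain ⟨a, haL, rfl⟩ := (mem_Phi_iff α).1 hα
  obtain ⟨b, hbL, rfl⟩ := (mem_Phi_iff β).1 hβ
  have haLen := D4 a haL
  have hbLen := D4 b hbL
  have htLen : tL.length = 8 := rfl
  have hat : ipL a tL = -4 := by
    rw [theta_eq, ip_toR a tL haLen htLen] at hαθ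
    have := div4_eq_int (x := ipL a tL) (n := -1) (by exact_mod_cast hαθ)
    omega
  have hbt : ipL b tL = -4 := by
    rw [theta_eq, ip_toR b tL hbLen htLen] at hβθ
    have := div4_eq_int (x := ipL b tL) (n := -1) (by exact_mod_cast hβθ)
    omega
  have hab : ipL a b = 0 := by
    rw [ip_toR a b haLen hbLen] at hαβ
    have := div4_eq_int (x := ipL a b) (n := 0) (by exact_mod_cast hαβ)
    omega
  obtain ⟨hcard16, hsum⟩ := coreL a (D5 a haL hat) b (D5 b hbL hbt) hab
  set l := LpLit.filter (PL a b) with hl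
  have hlLen : ∀ q ∈ l, q.length = 8 := fun q hq =>
    D4 q (D6 q (List.mem_filter.1 hq).1).1
  have hXT : {γ | γ ∈ PhiE8 ∧ ipE8 γ thetaE8 = 1 ∧ ipE8 (toR a) γ = 0 ∧ ipE8 γ (toR b) = -1}
      = toR '' {q | q ∈ l} := by
    ext γ
    constructor
    · rintro ⟨hγΦ, h1, h2, h3⟩
      obtain ⟨q, hqL, rfl⟩ := (mem_Phi_iff γ).1 hγΦ
      have hqLen := D4 q hqL
      have hq1 : ipL q tL = 4 := by
        rw [theta_eq, ip_toR q tL hqLen htLen] at h1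
        have := div4_eq_int (x := ipL q tL) (n := 1) (by exact_mod_cast h1)
        omega
      have hq2 : ipL a q = 0 := by
        rw [ip_toR a q haLen hqLen] at h2
        have := div4_eq_int (x := ipL a q) (n := 0) (by exact_mod_cast h2)
        omega
      have hq3 : ipL q b = -4 := by
        rw [ip_toR q b hqLen hbLen] at h3
        have := div4_eq_int (x := ipL q b) (n := -1) (by exact_mod_cast h3)
        omega
      refine ⟨q, ?_, rfl⟩
      show q ∈ l
      rw [hl, List.mem_filter]
      exact ⟨D7 q hqL hq1, by simp [PL, hq2, hq3]⟩
    · rintro ⟨q, hqm, rfl⟩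
      have hqf : q ∈ l := hqm
      have hqp := List.mem_filter.1 hqf
      have hqL : q ∈ LLit := (D6 q hqp.1).1
      have hqt : ipL q tL = 4 := (D6 q hqp.1).2
      have hPL : ipL a q = 0 ∧ ipL q b = -4 := by simpa [PL] using hqp.2
      have hqLen := D4 q hqL
      refine ⟨(mem_Phi_iff _).2 ⟨q, hqL, rfl⟩, ?_, ?_, ?_⟩
      · rw [theta_eq, ip_toR q tL hqLen htLen, hqt]; norm_num
      · rw [ip_toR a q haLen hqLen, hPL.1]; norm_num
      · rw [ip_toR q b hqLen hbLen, hPL.2]; norm_num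
  have hnodup : l.Nodup := D8.filter _
  have hset : {q | q ∈ l} = (↑l.toFinset : Set (List ℤ)) := by
    ext q; simp
  have hinj : Set.InjOn toR {q | q ∈ l} := by
    intro x hx y hy hxy
    exact toR_inj (hlLen x hx) (hlLen y hy) hxy
  constructor
  · rw [hXT, finsum_mem_image hinj, hset, finsum_mem_coe_finset,
      List.sum_toFinset _ hnodup, (sumL_spec l hlLen).2, hsum]
    exact toR_affL a b haLen hbLen
  · rw [hXT, Set.ncard_image_of_injOn hinj, hset, Set.ncard_coe_finset,
      List.toFinset_card_of_nodup hnodup, hcard16]
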